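/- The equation ∑_{k=1}^∞ e^{-s √(k(k+2))} = 1 has a unique real solution s_0 > 0, and this solution satisfies 1.015 < 2 s_0 < 1.016. -/
import Mathlib
open Real Finset

lemma S9_le_exp {q : ℝ} (hq : 0 ≤ q) :
    1 + q + q^2/2 + q^3/6 + q^4/24 + q^5/120 + q^6/720 + q^7/5040 + q^8/40320 ≤ Real.exp q := by
  have h := Real.sum_le_exp_of_nonneg hq 9
  norm_num [Finset.sum_range_succ, Nat.factorial] at h
  linarith

lemma exp_le_T9 {q : ℝ} (h0 : 0 ≤ q) (h1 : q ≤ 1) :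
    Real.exp q ≤ 1 + q + q^2/2 + q^3/6 + q^4/24 + q^5/120 + q^6/720 + q^7/5040 + q^8/40320 + q^9/326592 := by
  have h := Real.exp_bound (x := q) (by rwa [abs_of_nonneg h0]) (n := 9) (by norm_num)
  rw [abs_of_nonneg h0] at h
  have h2 := (abs_sub_le_iff.mp h).1
  norm_num [Finset.sum_range_succ, Nat.factorial] at h2
  linarith

lemma exp_pow16_le {u t : ℝ} (h : Real.exp u ≤ t) : Real.exp (16 * u) ≤ t ^ 16 := by
  have he : Real.exp (16 * u) = Real.exp u ^ 16 := by
    rw [show (16:ℝ) = ((16:ℕ):ℝ) by norm_num, Real.exp_nat_mul]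
  rw [he]; exact pow_le_pow_left₀ (Real.exp_pos u).le h 16

lemma le_exp_pow16 {u t : ℝ} (ht : 0 ≤ t) (h : t ≤ Real.exp u) : t ^ 16 ≤ Real.exp (16 * u) := by
  have he : Real.exp (16 * u) = Real.exp u ^ 16 := by
    rw [show (16:ℝ) = ((16:ℕ):ℝ) by norm_num, Real.exp_nat_mul]
  rw [he]; exact pow_le_pow_left₀ ht h 16

lemma exp_neg_ge {x q T c : ℝ} (hx : x ≤ q) (hT : Real.exp q ≤ T) (hc0 : 0 ≤ c) (hc : c * T ≤ 1) :
    c ≤ Real.exp (-x) := by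
  have h1 : Real.exp (-q) ≤ Real.exp (-x) := Real.exp_le_exp.mpr (by linarith)
  have h3 : Real.exp (-q) * Real.exp q = 1 := by rw [← Real.exp_add]; simp
  nlinarith [Real.exp_pos q, Real.exp_pos (-q)]

lemma exp_neg_le {x q S c : ℝ} (hq : q ≤ x) (hS : S ≤ Real.exp q) (hS0 : 0 < S) (hc : 1 ≤ S * c) :
    Real.exp (-x) ≤ c := by
  have h1 : Real.exp (-x) ≤ Real.exp (-q) := Real.exp_le_exp.mpr (by linarith)
  have h3 : Real.exp (-q) * Real.exp q = 1 := by rw [← Real.exp_add]; simp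
  nlinarith [Real.exp_pos q, Real.exp_pos (-q)]

lemma sqrt_le_r {C r : ℝ} (hC : 0 ≤ C) (hr : 0 ≤ r) (h : C ≤ r^2) : Real.sqrt C ≤ r := by
  nlinarith [Real.sq_sqrt hC, Real.sqrt_nonneg C]

lemma r_le_sqrt {C r : ℝ} (hC : 0 ≤ C) (hr : 0 ≤ r) (h : r^2 ≤ C) : r ≤ Real.sqrt C := by
  nlinarith [Real.sq_sqrt hC, Real.sqrt_nonneg C]

open Real Finset

noncomputable def gg (s : ℝ) (n : ℕ) : ℝ :=
  Real.exp (-(s * Real.sqrt (((n : ℝ) + 1) * ((n : ℝ) + 3))))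

lemma gg_le_pow {s : ℝ} (hs : 0 ≤ s) (n : ℕ) :
    gg s n ≤ Real.exp (-s) ^ (n + 1) := by
  have h1 : ((n : ℝ) + 1) ≤ Real.sqrt (((n : ℝ) + 1) * ((n : ℝ) + 3)) := by
    nlinarith [Real.sq_sqrt (show (0:ℝ) ≤ ((n:ℝ)+1)*((n:ℝ)+3) by positivity),
      Real.sqrt_nonneg (((n:ℝ)+1)*((n:ℝ)+3)), Nat.cast_nonneg (α := ℝ) n]
  have : Real.exp (-s) ^ (n+1) = Real.exp (-(s * ((n:ℝ)+1))) := by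
    rw [← Real.exp_nat_mul]; congr 1; push_cast; ring
  rw [gg, this]
  apply Real.exp_le_exp.mpr
  have := Real.sqrt_nonneg (((n : ℝ) + 1) * ((n : ℝ) + 3))
  nlinarith
lemma summable_pow {r : ℝ} (h0 : 0 ≤ r) (h1 : r < 1) :
    Summable (fun n : ℕ => r ^ (n + 1)) := by
  simpa [pow_succ, mul_comm] using (summable_geometric_of_lt_one h0 h1).mul_left r

lemma summable_gg {s : ℝ} (hs : 0 < s) : Summable (gg s) := by
  have hr1 : Real.exp (-s) < 1 := Real.exp_lt_one_iff.mpr (by linarith)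
  exact Summable.of_nonneg_of_le (fun n => (Real.exp_pos _).le) (gg_le_pow hs.le)
    (summable_pow (Real.exp_pos _).le hr1)

lemma key_eq (s : ℝ) :
    (∑' k : ℕ+, Real.exp (-s * Real.sqrt ((k : ℝ) * ((k : ℝ) + 2)))) = ∑' n : ℕ, gg s n := by
  rw [← Equiv.tsum_eq Equiv.pnatEquivNat.symm
    (fun k : ℕ+ => Real.exp (-s * Real.sqrt ((k : ℝ) * ((k : ℝ) + 2))))]
  refine tsum_congr fun n => ?_
  have hcast : ((Equiv.pnatEquivNat.symm n : ℕ+) : ℝ) = (n : ℝ) + 1 := by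
    simp [Equiv.pnatEquivNat, Nat.succPNat]
  simp only [gg, hcast]
  congr 1
  ring_nf

lemma gg_anti {s t : ℝ} (hs : 0 ≤ s) (hst : s ≤ t) (n : ℕ) : gg t n ≤ gg s n := by
  apply Real.exp_le_exp.mpr
  have h := Real.sqrt_nonneg (((n : ℝ) + 1) * ((n : ℝ) + 3))
  nlinarith

lemma F_strict_anti {s t : ℝ} (hs : 0 < s) (hst : s < t) :
    (∑' n : ℕ, gg t n) < ∑' n : ℕ, gg s n := by
  refine Summable.tsum_lt_tsum (i := 0) (fun n => gg_anti hs.le hst.le n) ?_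
    (summable_gg (hs.trans hst)) (summable_gg hs)
  apply Real.exp_lt_exp.mpr
  have h3 : (0:ℝ) < Real.sqrt (((0:ℕ):ℝ) + 1) * (((0:ℕ):ℝ) + 3) := by norm_num
  have h : (0:ℝ) < Real.sqrt ((((0:ℕ):ℝ) + 1) * (((0:ℕ):ℝ) + 3)) := by
    apply Real.sqrt_pos.mpr; norm_num
  nlinarith

lemma F_cont : ContinuousOn (fun s => ∑' n : ℕ, gg s n) (Set.Icc (0.5075 : ℝ) 0.508) := by
  have hr1 : Real.exp (-(0.5075:ℝ)) < 1 := Real.exp_lt_one_iff.mpr (by norm_num)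
  refine continuousOn_tsum (fun n => ?_) (summable_pow (Real.exp_pos _).le hr1) ?_
  · exact (Real.continuous_exp.comp (by continuity)).continuousOn
  · intro n x hx
    have hpos : 0 < gg x n := Real.exp_pos _
    rw [Real.norm_eq_abs, abs_of_pos hpos]
    calc gg x n ≤ gg 0.5075 n := gg_anti (by norm_num) hx.1 n
      _ ≤ Real.exp (-(0.5075:ℝ)) ^ (n+1) := gg_le_pow (by norm_num) n


lemma tail_le {s R : ℝ} (hs : 0 < s) (hR : Real.exp (-s) ≤ R) (hR1 : R < 1) (N : ℕ) :
    (∑' n : ℕ, gg s (n + N)) ≤ R ^ (N + 1) * (1 - R)⁻¹ := by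
  have hR0 : 0 ≤ R := le_trans (Real.exp_pos _).le hR
  have h1 : ∀ n : ℕ, gg s (n + N) ≤ R ^ (N + 1) * R ^ n := by
    intro n
    calc gg s (n + N) ≤ Real.exp (-s) ^ (n + N + 1) := gg_le_pow hs.le _
      _ ≤ R ^ (n + N + 1) := pow_le_pow_left₀ (Real.exp_pos _).le hR _
      _ = R ^ (N + 1) * R ^ n := by ring
  have hsum1 : Summable (fun n => gg s (n + N)) := (summable_nat_add_iff N).mpr (summable_gg hs)
  have hsum2 : Summable (fun n : ℕ => R ^ (N + 1) * R ^ n) :=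
    (summable_geometric_of_lt_one hR0 hR1).mul_left _
  calc (∑' n, gg s (n + N)) ≤ ∑' n : ℕ, R ^ (N + 1) * R ^ n := Summable.tsum_le_tsum h1 hsum1 hsum2
    _ = R ^ (N + 1) * (1 - R)⁻¹ := by rw [tsum_mul_left, tsum_geometric_of_lt_one hR0 hR1]
set_option maxHeartbeats 1000000 in
lemma lowT0 : (415188991/1000000000 : ℝ) ≤ gg 0.5075 0 := by
  have hgg : gg 0.5075 0 = Real.exp (-(0.5075 * Real.sqrt (3 : ℝ))) := by norm_num [gg]
  have hC : Real.sqrt (3 : ℝ) ≤ (86603/50000 : ℝ) := sqrt_le_r (by norm_num) (by norm_num) (by norm_num)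
  have hu : Real.exp ((17580409/20000000 : ℝ)/16) ≤ (264119/250000 : ℝ) :=
    le_trans (exp_le_T9 (by norm_num) (by norm_num)) (by norm_num)
  have hq : Real.exp (17580409/20000000 : ℝ) ≤ (264119/250000 : ℝ)^16 := by
    have h := exp_pow16_le hu
    rwa [show (16:ℝ)*((17580409/20000000 : ℝ)/16) = (17580409/20000000 : ℝ) by ring] at h
  rw [hgg]
  exact exp_neg_ge (by linarith) hq (by norm_num) (by norm_num)
set_option maxHeartbeats 1000000 in
lemma lowT1 : (238013361/1000000000 : ℝ) ≤ gg 0.5075 1 := by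
  have hgg : gg 0.5075 1 = Real.exp (-(0.5075 * Real.sqrt (8 : ℝ))) := by norm_num [gg]
  have hC : Real.sqrt (8 : ℝ) ≤ (282843/100000 : ℝ) := sqrt_le_r (by norm_num) (by norm_num) (by norm_num)
  have hu : Real.exp ((57417129/40000000 : ℝ)/16) ≤ (10938617/10000000 : ℝ) :=
    le_trans (exp_le_T9 (by norm_num) (by norm_num)) (by norm_num)
  have hq : Real.exp (57417129/40000000 : ℝ) ≤ (10938617/10000000 : ℝ)^16 := by
    have h := exp_pow16_le hu
    rwa [show (16:ℝ)*((57417129/40000000 : ℝ)/16) = (57417129/40000000 : ℝ) by ring] at h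
  rw [hgg]
  exact exp_neg_ge (by linarith) hq (by norm_num) (by norm_num)
set_option maxHeartbeats 1000000 in
lemma lowT2 : (35019937/250000000 : ℝ) ≤ gg 0.5075 2 := by
  have hgg : gg 0.5075 2 = Real.exp (-(0.5075 * Real.sqrt (15 : ℝ))) := by norm_num [gg]
  have hC : Real.sqrt (15 : ℝ) ≤ (387299/100000 : ℝ) := sqrt_le_r (by norm_num) (by norm_num) (by norm_num)
  have hu : Real.exp ((78621697/40000000 : ℝ)/16) ≤ (2826777/2500000 : ℝ) :=
    le_trans (exp_le_T9 (by norm_num) (by norm_num)) (by norm_num)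
  have hq : Real.exp (78621697/40000000 : ℝ) ≤ (2826777/2500000 : ℝ)^16 := by
    have h := exp_pow16_le hu
    rwa [show (16:ℝ)*((78621697/40000000 : ℝ)/16) = (78621697/40000000 : ℝ) by ring] at h
  rw [hgg]
  exact exp_neg_ge (by linarith) hq (by norm_num) (by norm_num)
set_option maxHeartbeats 1000000 in
lemma lowT3 : (41611453/500000000 : ℝ) ≤ gg 0.5075 3 := by
  have hgg : gg 0.5075 3 = Real.exp (-(0.5075 * Real.sqrt (24 : ℝ))) := by norm_num [gg]
  have hC : Real.sqrt (24 : ℝ) ≤ (244949/50000 : ℝ) := sqrt_le_r (by norm_num) (by norm_num) (by norm_num)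
  have hu : Real.exp ((49724647/20000000 : ℝ)/16) ≤ (11681129/10000000 : ℝ) :=
    le_trans (exp_le_T9 (by norm_num) (by norm_num)) (by norm_num)
  have hq : Real.exp (49724647/20000000 : ℝ) ≤ (11681129/10000000 : ℝ)^16 := by
    have h := exp_pow16_le hu
    rwa [show (16:ℝ)*((49724647/20000000 : ℝ)/16) = (49724647/20000000 : ℝ) by ring] at h
  rw [hgg]
  exact exp_neg_ge (by linarith) hq (by norm_num) (by norm_num)
set_option maxHeartbeats 1000000 in
lemma lowT4 : (24833597/500000000 : ℝ) ≤ gg 0.5075 4 := by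
  have hgg : gg 0.5075 4 = Real.exp (-(0.5075 * Real.sqrt (35 : ℝ))) := by norm_num [gg]
  have hC : Real.sqrt (35 : ℝ) ≤ (73951/12500 : ℝ) := sqrt_le_r (by norm_num) (by norm_num) (by norm_num)
  have hu : Real.exp ((15012053/5000000 : ℝ)/16) ≤ (301603/250000 : ℝ) :=
    le_trans (exp_le_T9 (by norm_num) (by norm_num)) (by norm_num)
  have hq : Real.exp (15012053/5000000 : ℝ) ≤ (301603/250000 : ℝ)^16 := by
    have h := exp_pow16_le hu
    rwa [show (16:ℝ)*((15012053/5000000 : ℝ)/16) = (15012053/5000000 : ℝ) by ring] at h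
  rw [hgg]
  exact exp_neg_ge (by linarith) hq (by norm_num) (by norm_num)
set_option maxHeartbeats 1000000 in
lemma lowT5 : (14858033/500000000 : ℝ) ≤ gg 0.5075 5 := by
  have hgg : gg 0.5075 5 = Real.exp (-(0.5075 * Real.sqrt (48 : ℝ))) := by norm_num [gg]
  have hC : Real.sqrt (48 : ℝ) ≤ (692821/100000 : ℝ) := sqrt_le_r (by norm_num) (by norm_num) (by norm_num)
  have hu : Real.exp ((140642663/40000000 : ℝ)/16) ≤ (2491541/2000000 : ℝ) :=
    le_trans (exp_le_T9 (by norm_num) (by norm_num)) (by norm_num)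
  have hq : Real.exp (140642663/40000000 : ℝ) ≤ (2491541/2000000 : ℝ)^16 := by
    have h := exp_pow16_le hu
    rwa [show (16:ℝ)*((140642663/40000000 : ℝ)/16) = (140642663/40000000 : ℝ) by ring] at h
  rw [hgg]
  exact exp_neg_ge (by linarith) hq (by norm_num) (by norm_num)
set_option maxHeartbeats 1000000 in
lemma lowT6 : (8903531/500000000 : ℝ) ≤ gg 0.5075 6 := by
  have hgg : gg 0.5075 6 = Real.exp (-(0.5075 * Real.sqrt (63 : ℝ))) := by norm_num [gg]
  have hC : Real.sqrt (63 : ℝ) ≤ (396863/50000 : ℝ) := sqrt_le_r (by norm_num) (by norm_num) (by norm_num)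
  have hu : Real.exp ((80563189/20000000 : ℝ)/16) ≤ (12862873/10000000 : ℝ) :=
    le_trans (exp_le_T9 (by norm_num) (by norm_num)) (by norm_num)
  have hq : Real.exp (80563189/20000000 : ℝ) ≤ (12862873/10000000 : ℝ)^16 := by
    have h := exp_pow16_le hu
    rwa [show (16:ℝ)*((80563189/20000000 : ℝ)/16) = (80563189/20000000 : ℝ) by ring] at h
  rw [hgg]
  exact exp_neg_ge (by linarith) hq (by norm_num) (by norm_num)
set_option maxHeartbeats 1000000 in
lemma lowT7 : (10681711/1000000000 : ℝ) ≤ gg 0.5075 7 := by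
  have hgg : gg 0.5075 7 = Real.exp (-(0.5075 * Real.sqrt (80 : ℝ))) := by norm_num [gg]
  have hC : Real.sqrt (80 : ℝ) ≤ (223607/25000 : ℝ) := sqrt_le_r (by norm_num) (by norm_num) (by norm_num)
  have hu : Real.exp ((45392221/10000000 : ℝ)/16) ≤ (13280363/10000000 : ℝ) :=
    le_trans (exp_le_T9 (by norm_num) (by norm_num)) (by norm_num)
  have hq : Real.exp (45392221/10000000 : ℝ) ≤ (13280363/10000000 : ℝ)^16 := by
    have h := exp_pow16_le hu
    rwa [show (16:ℝ)*((45392221/10000000 : ℝ)/16) = (45392221/10000000 : ℝ) by ring] at h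
  rw [hgg]
  exact exp_neg_ge (by linarith) hq (by norm_num) (by norm_num)
set_option maxHeartbeats 1000000 in
lemma lowT8 : (6412123/1000000000 : ℝ) ≤ gg 0.5075 8 := by
  have hgg : gg 0.5075 8 = Real.exp (-(0.5075 * Real.sqrt (99 : ℝ))) := by norm_num [gg]
  have hC : Real.sqrt (99 : ℝ) ≤ (248747/25000 : ℝ) := sqrt_le_r (by norm_num) (by norm_num) (by norm_num)
  have hu : Real.exp ((50495641/10000000 : ℝ)/16) ≤ (13710787/10000000 : ℝ) :=
    le_trans (exp_le_T9 (by norm_num) (by norm_num)) (by norm_num)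
  have hq : Real.exp (50495641/10000000 : ℝ) ≤ (13710787/10000000 : ℝ)^16 := by
    have h := exp_pow16_le hu
    rwa [show (16:ℝ)*((50495641/10000000 : ℝ)/16) = (50495641/10000000 : ℝ) by ring] at h
  rw [hgg]
  exact exp_neg_ge (by linarith) hq (by norm_num) (by norm_num)
set_option maxHeartbeats 1000000 in
lemma lowT9 : (1925563/500000000 : ℝ) ≤ gg 0.5075 9 := by
  have hgg : gg 0.5075 9 = Real.exp (-(0.5075 * Real.sqrt (120 : ℝ))) := by norm_num [gg]
  have hC : Real.sqrt (120 : ℝ) ≤ (547723/50000 : ℝ) := sqrt_le_r (by norm_num) (by norm_num) (by norm_num)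
  have hu : Real.exp ((111187769/20000000 : ℝ)/16) ≤ (14154703/10000000 : ℝ) :=
    le_trans (exp_le_T9 (by norm_num) (by norm_num)) (by norm_num)
  have hq : Real.exp (111187769/20000000 : ℝ) ≤ (14154703/10000000 : ℝ)^16 := by
    have h := exp_pow16_le hu
    rwa [show (16:ℝ)*((111187769/20000000 : ℝ)/16) = (111187769/20000000 : ℝ) by ring] at h
  rw [hgg]
  exact exp_neg_ge (by linarith) hq (by norm_num) (by norm_num)
set_option maxHeartbeats 1000000 in
lemma lowT10 : (289237/125000000 : ℝ) ≤ gg 0.5075 10 := by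
  have hgg : gg 0.5075 10 = Real.exp (-(0.5075 * Real.sqrt (143 : ℝ))) := by norm_num [gg]
  have hC : Real.sqrt (143 : ℝ) ≤ (1195827/100000 : ℝ) := sqrt_le_r (by norm_num) (by norm_num) (by norm_num)
  have hu : Real.exp ((242752881/40000000 : ℝ)/16) ≤ (7306317/5000000 : ℝ) :=
    le_trans (exp_le_T9 (by norm_num) (by norm_num)) (by norm_num)
  have hq : Real.exp (242752881/40000000 : ℝ) ≤ (7306317/5000000 : ℝ)^16 := by
    have h := exp_pow16_le hu
    rwa [show (16:ℝ)*((242752881/40000000 : ℝ)/16) = (242752881/40000000 : ℝ) by ring] at h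
  rw [hgg]
  exact exp_neg_ge (by linarith) hq (by norm_num) (by norm_num)
set_option maxHeartbeats 1000000 in
lemma lowT11 : (43459/31250000 : ℝ) ≤ gg 0.5075 11 := by
  have hgg : gg 0.5075 11 = Real.exp (-(0.5075 * Real.sqrt (168 : ℝ))) := by norm_num [gg]
  have hC : Real.sqrt (168 : ℝ) ≤ (1296149/100000 : ℝ) := sqrt_le_r (by norm_num) (by norm_num) (by norm_num)
  have hu : Real.exp ((263118247/40000000 : ℝ)/16) ≤ (7542549/5000000 : ℝ) :=
    le_trans (exp_le_T9 (by norm_num) (by norm_num)) (by norm_num)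
  have hq : Real.exp (263118247/40000000 : ℝ) ≤ (7542549/5000000 : ℝ)^16 := by
    have h := exp_pow16_le hu
    rwa [show (16:ℝ)*((263118247/40000000 : ℝ)/16) = (263118247/40000000 : ℝ) by ring] at h
  rw [hgg]
  exact exp_neg_ge (by linarith) hq (by norm_num) (by norm_num)
set_option maxHeartbeats 1000000 in
lemma lowT12 : (41801/50000000 : ℝ) ≤ gg 0.5075 12 := by
  have hgg : gg 0.5075 12 = Real.exp (-(0.5075 * Real.sqrt (195 : ℝ))) := by norm_num [gg]
  have hC : Real.sqrt (195 : ℝ) ≤ (55857/4000 : ℝ) := sqrt_le_r (by norm_num) (by norm_num) (by norm_num)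
  have hu : Real.exp ((11338971/1600000 : ℝ)/16) ≤ (15572611/10000000 : ℝ) :=
    le_trans (exp_le_T9 (by norm_num) (by norm_num)) (by norm_num)
  have hq : Real.exp (11338971/1600000 : ℝ) ≤ (15572611/10000000 : ℝ)^16 := by
    have h := exp_pow16_le hu
    rwa [show (16:ℝ)*((11338971/1600000 : ℝ)/16) = (11338971/1600000 : ℝ) by ring] at h
  rw [hgg]
  exact exp_neg_ge (by linarith) hq (by norm_num) (by norm_num)
set_option maxHeartbeats 1000000 in
lemma lowT13 : (20107/40000000 : ℝ) ≤ gg 0.5075 13 := by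
  have hgg : gg 0.5075 13 = Real.exp (-(0.5075 * Real.sqrt (224 : ℝ))) := by norm_num [gg]
  have hC : Real.sqrt (224 : ℝ) ≤ (1496663/100000 : ℝ) := sqrt_le_r (by norm_num) (by norm_num) (by norm_num)
  have hu : Real.exp ((303822589/40000000 : ℝ)/16) ≤ (8037843/5000000 : ℝ) :=
    le_trans (exp_le_T9 (by norm_num) (by norm_num)) (by norm_num)
  have hq : Real.exp (303822589/40000000 : ℝ) ≤ (8037843/5000000 : ℝ)^16 := by
    have h := exp_pow16_le hu
    rwa [show (16:ℝ)*((303822589/40000000 : ℝ)/16) = (303822589/40000000 : ℝ) by ring] at h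
  rw [hgg]
  exact exp_neg_ge (by linarith) hq (by norm_num) (by norm_num)
set_option maxHeartbeats 1000000 in
lemma lowT14 : (302289/1000000000 : ℝ) ≤ gg 0.5075 14 := by
  have hgg : gg 0.5075 14 = Real.exp (-(0.5075 * Real.sqrt (255 : ℝ))) := by norm_num [gg]
  have hC : Real.sqrt (255 : ℝ) ≤ (199609/12500 : ℝ) := sqrt_le_r (by norm_num) (by norm_num) (by norm_num)
  have hu : Real.exp ((40520627/5000000 : ℝ)/16) ≤ (16594859/10000000 : ℝ) :=
    le_trans (exp_le_T9 (by norm_num) (by norm_num)) (by norm_num)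
  have hq : Real.exp (40520627/5000000 : ℝ) ≤ (16594859/10000000 : ℝ)^16 := by
    have h := exp_pow16_le hu
    rwa [show (16:ℝ)*((40520627/5000000 : ℝ)/16) = (40520627/5000000 : ℝ) by ring] at h
  rw [hgg]
  exact exp_neg_ge (by linarith) hq (by norm_num) (by norm_num)
set_option maxHeartbeats 1000000 in
lemma lowT15 : (181807/1000000000 : ℝ) ≤ gg 0.5075 15 := by
  have hgg : gg 0.5075 15 = Real.exp (-(0.5075 * Real.sqrt (288 : ℝ))) := by norm_num [gg]
  have hC : Real.sqrt (288 : ℝ) ≤ (1697057/100000 : ℝ) := sqrt_le_r (by norm_num) (by norm_num) (by norm_num)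
  have hu : Real.exp ((344502571/40000000 : ℝ)/16) ≤ (17130669/10000000 : ℝ) :=
    le_trans (exp_le_T9 (by norm_num) (by norm_num)) (by norm_num)
  have hq : Real.exp (344502571/40000000 : ℝ) ≤ (17130669/10000000 : ℝ)^16 := by
    have h := exp_pow16_le hu
    rwa [show (16:ℝ)*((344502571/40000000 : ℝ)/16) = (344502571/40000000 : ℝ) by ring] at h
  rw [hgg]
  exact exp_neg_ge (by linarith) hq (by norm_num) (by norm_num)
set_option maxHeartbeats 1000000 in
lemma lowT16 : (27339/250000000 : ℝ) ≤ gg 0.5075 16 := by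
  have hgg : gg 0.5075 16 = Real.exp (-(0.5075 * Real.sqrt (323 : ℝ))) := by norm_num [gg]
  have hC : Real.sqrt (323 : ℝ) ≤ (1797221/100000 : ℝ) := sqrt_le_r (by norm_num) (by norm_num) (by norm_num)
  have hu : Real.exp ((364835863/40000000 : ℝ)/16) ≤ (8841831/5000000 : ℝ) :=
    le_trans (exp_le_T9 (by norm_num) (by norm_num)) (by norm_num)
  have hq : Real.exp (364835863/40000000 : ℝ) ≤ (8841831/5000000 : ℝ)^16 := by
    have h := exp_pow16_le hu
    rwa [show (16:ℝ)*((364835863/40000000 : ℝ)/16) = (364835863/40000000 : ℝ) by ring] at h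
  rw [hgg]
  exact exp_neg_ge (by linarith) hq (by norm_num) (by norm_num)
set_option maxHeartbeats 1000000 in
lemma lowT17 : (65783/1000000000 : ℝ) ≤ gg 0.5075 17 := by
  have hgg : gg 0.5075 17 = Real.exp (-(0.5075 * Real.sqrt (360 : ℝ))) := by norm_num [gg]
  have hC : Real.sqrt (360 : ℝ) ≤ (1897367/100000 : ℝ) := sqrt_le_r (by norm_num) (by norm_num) (by norm_num)
  have hu : Real.exp ((385165501/40000000 : ℝ)/16) ≤ (18254401/10000000 : ℝ) :=
    le_trans (exp_le_T9 (by norm_num) (by norm_num)) (by norm_num)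
  have hq : Real.exp (385165501/40000000 : ℝ) ≤ (18254401/10000000 : ℝ)^16 := by
    have h := exp_pow16_le hu
    rwa [show (16:ℝ)*((385165501/40000000 : ℝ)/16) = (385165501/40000000 : ℝ) by ring] at h
  rw [hgg]
  exact exp_neg_ge (by linarith) hq (by norm_num) (by norm_num)
set_option maxHeartbeats 1000000 in
lemma lowT18 : (1583/40000000 : ℝ) ≤ gg 0.5075 18 := by
  have hgg : gg 0.5075 18 = Real.exp (-(0.5075 * Real.sqrt (399 : ℝ))) := by norm_num [gg]
  have hC : Real.sqrt (399 : ℝ) ≤ (1997499/100000 : ℝ) := sqrt_le_r (by norm_num) (by norm_num) (by norm_num)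
  have hu : Real.exp ((405492297/40000000 : ℝ)/16) ≤ (9421739/5000000 : ℝ) :=
    le_trans (exp_le_T9 (by norm_num) (by norm_num)) (by norm_num)
  have hq : Real.exp (405492297/40000000 : ℝ) ≤ (9421739/5000000 : ℝ)^16 := by
    have h := exp_pow16_le hu
    rwa [show (16:ℝ)*((405492297/40000000 : ℝ)/16) = (405492297/40000000 : ℝ) by ring] at h
  rw [hgg]
  exact exp_neg_ge (by linarith) hq (by norm_num) (by norm_num)
set_option maxHeartbeats 1000000 in
lemma lowT19 : (23809/1000000000 : ℝ) ≤ gg 0.5075 19 := by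
  have hgg : gg 0.5075 19 = Real.exp (-(0.5075 * Real.sqrt (440 : ℝ))) := by norm_num [gg]
  have hC : Real.sqrt (440 : ℝ) ≤ (1048809/50000 : ℝ) := sqrt_le_r (by norm_num) (by norm_num) (by norm_num)
  have hu : Real.exp ((212908227/20000000 : ℝ)/16) ≤ (19451483/10000000 : ℝ) :=
    le_trans (exp_le_T9 (by norm_num) (by norm_num)) (by norm_num)
  have hq : Real.exp (212908227/20000000 : ℝ) ≤ (19451483/10000000 : ℝ)^16 := by
    have h := exp_pow16_le hu
    rwa [show (16:ℝ)*((212908227/20000000 : ℝ)/16) = (212908227/20000000 : ℝ) by ring] at h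
  rw [hgg]
  exact exp_neg_ge (by linarith) hq (by norm_num) (by norm_num)
set_option maxHeartbeats 1000000 in
lemma lowT20 : (573/40000000 : ℝ) ≤ gg 0.5075 20 := by
  have hgg : gg 0.5075 20 = Real.exp (-(0.5075 * Real.sqrt (483 : ℝ))) := by norm_num [gg]
  have hC : Real.sqrt (483 : ℝ) ≤ (2197727/100000 : ℝ) := sqrt_le_r (by norm_num) (by norm_num) (by norm_num)
  have hu : Real.exp ((446138581/40000000 : ℝ)/16) ≤ (20079043/10000000 : ℝ) :=
    le_trans (exp_le_T9 (by norm_num) (by norm_num)) (by norm_num)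
  have hq : Real.exp (446138581/40000000 : ℝ) ≤ (20079043/10000000 : ℝ)^16 := by
    have h := exp_pow16_le hu
    rwa [show (16:ℝ)*((446138581/40000000 : ℝ)/16) = (446138581/40000000 : ℝ) by ring] at h
  rw [hgg]
  exact exp_neg_ge (by linarith) hq (by norm_num) (by norm_num)
set_option maxHeartbeats 1000000 in
lemma lowT21 : (8619/1000000000 : ℝ) ≤ gg 0.5075 21 := by
  have hgg : gg 0.5075 21 = Real.exp (-(0.5075 * Real.sqrt (528 : ℝ))) := by norm_num [gg]
  have hC : Real.sqrt (528 : ℝ) ≤ (1148913/50000 : ℝ) := sqrt_le_r (by norm_num) (by norm_num) (by norm_num)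
  have hu : Real.exp ((233229339/20000000 : ℝ)/16) ≤ (4145357/2000000 : ℝ) :=
    le_trans (exp_le_T9 (by norm_num) (by norm_num)) (by norm_num)
  have hq : Real.exp (233229339/20000000 : ℝ) ≤ (4145357/2000000 : ℝ)^16 := by
    have h := exp_pow16_le hu
    rwa [show (16:ℝ)*((233229339/20000000 : ℝ)/16) = (233229339/20000000 : ℝ) by ring] at h
  rw [hgg]
  exact exp_neg_ge (by linarith) hq (by norm_num) (by norm_num)
set_option maxHeartbeats 1000000 in
lemma lowerA : (1 : ℝ) < ∑' n : ℕ, gg 0.5075 n := by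
  have hsum := summable_gg (show (0:ℝ) < 0.5075 by norm_num)
  have hpart := Summable.sum_le_tsum (Finset.range 22) (fun i _ => le_of_lt (Real.exp_pos _)) hsum
  refine lt_of_lt_of_le ?_ hpart
  have hsL : (100042913/100000000 : ℝ) ≤ ∑ i ∈ Finset.range 22, gg 0.5075 i := by
    simp only [Finset.sum_range_succ, Finset.sum_range_zero]
    linarith [lowT0, lowT1, lowT2, lowT3, lowT4, lowT5, lowT6, lowT7, lowT8, lowT9, lowT10, lowT11, lowT12, lowT13, lowT14, lowT15, lowT16, lowT17, lowT18, lowT19, lowT20, lowT21]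
  refine lt_of_lt_of_le (by norm_num) hsL
set_option maxHeartbeats 1000000 in
lemma upT0 : gg 0.508 0 ≤ (41483263/100000000 : ℝ) := by
  have hgg : gg 0.508 0 = Real.exp (-(0.508 * Real.sqrt (3 : ℝ))) := by norm_num [gg]
  have hC : (34641/20000 : ℝ) ≤ Real.sqrt (3 : ℝ) := r_le_sqrt (by norm_num) (by norm_num) (by norm_num)
  have hu : (10565327/10000000 : ℝ) ≤ Real.exp ((4399407/5000000 : ℝ)/16) :=
    le_trans (by norm_num) (S9_le_exp (by norm_num))
  have hq : (10565327/10000000 : ℝ)^16 ≤ Real.exp (4399407/5000000 : ℝ) := by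
    have h := le_exp_pow16 (by norm_num) hu
    rwa [show (16:ℝ)*((4399407/5000000 : ℝ)/16) = (4399407/5000000 : ℝ) by ring] at h
  rw [hgg]
  refine exp_neg_le ?_ hq (by positivity) (by norm_num)
  have h0 : (0:ℝ) ≤ Real.sqrt (3 : ℝ) := Real.sqrt_nonneg _
  linarith
set_option maxHeartbeats 1000000 in
lemma upT1 : gg 0.508 1 ≤ (4753567/20000000 : ℝ) := by
  have hgg : gg 0.508 1 = Real.exp (-(0.508 * Real.sqrt (8 : ℝ))) := by norm_num [gg]
  have hC : (141421/50000 : ℝ) ≤ Real.sqrt (8 : ℝ) := r_le_sqrt (by norm_num) (by norm_num) (by norm_num)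
  have hu : (546979/500000 : ℝ) ≤ Real.exp ((17960467/12500000 : ℝ)/16) :=
    le_trans (by norm_num) (S9_le_exp (by norm_num))
  have hq : (546979/500000 : ℝ)^16 ≤ Real.exp (17960467/12500000 : ℝ) := by
    have h := le_exp_pow16 (by norm_num) hu
    rwa [show (16:ℝ)*((17960467/12500000 : ℝ)/16) = (17960467/12500000 : ℝ) by ring] at h
  rw [hgg]
  refine exp_neg_le ?_ hq (by positivity) (by norm_num)
  have h0 : (0:ℝ) ≤ Real.sqrt (8 : ℝ) := Real.sqrt_nonneg _
  linarith
set_option maxHeartbeats 1000000 in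
lemma upT2 : gg 0.508 2 ≤ (139809657/1000000000 : ℝ) := by
  have hgg : gg 0.508 2 = Real.exp (-(0.508 * Real.sqrt (15 : ℝ))) := by norm_num [gg]
  have hC : (193649/50000 : ℝ) ≤ Real.sqrt (15 : ℝ) := r_le_sqrt (by norm_num) (by norm_num) (by norm_num)
  have hu : (1413559/1250000 : ℝ) ≤ Real.exp ((24593423/12500000 : ℝ)/16) :=
    le_trans (by norm_num) (S9_le_exp (by norm_num))
  have hq : (1413559/1250000 : ℝ)^16 ≤ Real.exp (24593423/12500000 : ℝ) := by
    have h := le_exp_pow16 (by norm_num) hu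
    rwa [show (16:ℝ)*((24593423/12500000 : ℝ)/16) = (24593423/12500000 : ℝ) by ring] at h
  rw [hgg]
  refine exp_neg_le ?_ hq (by positivity) (by norm_num)
  have h0 : (0:ℝ) ≤ Real.sqrt (15 : ℝ) := Real.sqrt_nonneg _
  linarith
set_option maxHeartbeats 1000000 in
lemma upT3 : gg 0.508 3 ≤ (83019807/1000000000 : ℝ) := by
  have hgg : gg 0.508 3 = Real.exp (-(0.508 * Real.sqrt (24 : ℝ))) := by norm_num [gg]
  have hC : (489897/100000 : ℝ) ≤ Real.sqrt (24 : ℝ) := r_le_sqrt (by norm_num) (by norm_num) (by norm_num)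
  have hu : (11682913/10000000 : ℝ) ≤ Real.exp ((62216919/25000000 : ℝ)/16) :=
    le_trans (by norm_num) (S9_le_exp (by norm_num))
  have hq : (11682913/10000000 : ℝ)^16 ≤ Real.exp (62216919/25000000 : ℝ) := by
    have h := le_exp_pow16 (by norm_num) hu
    rwa [show (16:ℝ)*((62216919/25000000 : ℝ)/16) = (62216919/25000000 : ℝ) by ring] at h
  rw [hgg]
  refine exp_neg_le ?_ hq (by positivity) (by norm_num)
  have h0 : (0:ℝ) ≤ Real.sqrt (24 : ℝ) := Real.sqrt_nonneg _
  linarith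
set_option maxHeartbeats 1000000 in
lemma upT4 : gg 0.508 4 ≤ (12380199/250000000 : ℝ) := by
  have hgg : gg 0.508 4 = Real.exp (-(0.508 * Real.sqrt (35 : ℝ))) := by norm_num [gg]
  have hC : (591607/100000 : ℝ) ≤ Real.sqrt (35 : ℝ) := r_le_sqrt (by norm_num) (by norm_num) (by norm_num)
  have hu : (6033173/5000000 : ℝ) ≤ Real.exp ((75134089/25000000 : ℝ)/16) :=
    le_trans (by norm_num) (S9_le_exp (by norm_num))
  have hq : (6033173/5000000 : ℝ)^16 ≤ Real.exp (75134089/25000000 : ℝ) := by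
    have h := le_exp_pow16 (by norm_num) hu
    rwa [show (16:ℝ)*((75134089/25000000 : ℝ)/16) = (75134089/25000000 : ℝ) by ring] at h
  rw [hgg]
  refine exp_neg_le ?_ hq (by positivity) (by norm_num)
  have h0 : (0:ℝ) ≤ Real.sqrt (35 : ℝ) := Real.sqrt_nonneg _
  linarith
set_option maxHeartbeats 1000000 in
lemma upT5 : gg 0.508 5 ≤ (29613513/1000000000 : ℝ) := by
  have hgg : gg 0.508 5 = Real.exp (-(0.508 * Real.sqrt (48 : ℝ))) := by norm_num [gg]
  have hC : (34641/5000 : ℝ) ≤ Real.sqrt (48 : ℝ) := r_le_sqrt (by norm_num) (by norm_num) (by norm_num)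
  have hu : (12460397/10000000 : ℝ) ≤ Real.exp ((4399407/1250000 : ℝ)/16) :=
    le_trans (by norm_num) (S9_le_exp (by norm_num))
  have hq : (12460397/10000000 : ℝ)^16 ≤ Real.exp (4399407/1250000 : ℝ) := by
    have h := le_exp_pow16 (by norm_num) hu
    rwa [show (16:ℝ)*((4399407/1250000 : ℝ)/16) = (4399407/1250000 : ℝ) by ring] at h
  rw [hgg]
  refine exp_neg_le ?_ hq (by positivity) (by norm_num)
  have h0 : (0:ℝ) ≤ Real.sqrt (48 : ℝ) := Real.sqrt_nonneg _
  linarith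
set_option maxHeartbeats 1000000 in
lemma upT6 : gg 0.508 6 ≤ (8868321/500000000 : ℝ) := by
  have hgg : gg 0.508 6 = Real.exp (-(0.508 * Real.sqrt (63 : ℝ))) := by norm_num [gg]
  have hC : (31749/4000 : ℝ) ≤ Real.sqrt (63 : ℝ) := r_le_sqrt (by norm_num) (by norm_num) (by norm_num)
  have hu : (12866059/10000000 : ℝ) ≤ Real.exp ((4032123/1000000 : ℝ)/16) :=
    le_trans (by norm_num) (S9_le_exp (by norm_num))
  have hq : (12866059/10000000 : ℝ)^16 ≤ Real.exp (4032123/1000000 : ℝ) := by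
    have h := le_exp_pow16 (by norm_num) hu
    rwa [show (16:ℝ)*((4032123/1000000 : ℝ)/16) = (4032123/1000000 : ℝ) by ring] at h
  rw [hgg]
  refine exp_neg_le ?_ hq (by positivity) (by norm_num)
  have h0 : (0:ℝ) ≤ Real.sqrt (63 : ℝ) := Real.sqrt_nonneg _
  linarith
set_option maxHeartbeats 1000000 in
lemma upT7 : gg 0.508 7 ≤ (10634107/1000000000 : ℝ) := by
  have hgg : gg 0.508 7 = Real.exp (-(0.508 * Real.sqrt (80 : ℝ))) := by norm_num [gg]
  have hC : (894427/100000 : ℝ) ≤ Real.sqrt (80 : ℝ) := r_le_sqrt (by norm_num) (by norm_num) (by norm_num)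
  have hu : (13284071/10000000 : ℝ) ≤ Real.exp ((113592229/25000000 : ℝ)/16) :=
    le_trans (by norm_num) (S9_le_exp (by norm_num))
  have hq : (13284071/10000000 : ℝ)^16 ≤ Real.exp (113592229/25000000 : ℝ) := by
    have h := le_exp_pow16 (by norm_num) hu
    rwa [show (16:ℝ)*((113592229/25000000 : ℝ)/16) = (113592229/25000000 : ℝ) by ring] at h
  rw [hgg]
  refine exp_neg_le ?_ hq (by positivity) (by norm_num)
  have h0 : (0:ℝ) ≤ Real.sqrt (80 : ℝ) := Real.sqrt_nonneg _
  linarith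
set_option maxHeartbeats 1000000 in
lemma upT8 : gg 0.508 8 ≤ (3190173/500000000 : ℝ) := by
  have hgg : gg 0.508 8 = Real.exp (-(0.508 * Real.sqrt (99 : ℝ))) := by norm_num [gg]
  have hC : (994987/100000 : ℝ) ≤ Real.sqrt (99 : ℝ) := r_le_sqrt (by norm_num) (by norm_num) (by norm_num)
  have hu : (2743009/2000000 : ℝ) ≤ Real.exp ((126363349/25000000 : ℝ)/16) :=
    le_trans (by norm_num) (S9_le_exp (by norm_num))
  have hq : (2743009/2000000 : ℝ)^16 ≤ Real.exp (126363349/25000000 : ℝ) := by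
    have h := le_exp_pow16 (by norm_num) hu
    rwa [show (16:ℝ)*((126363349/25000000 : ℝ)/16) = (126363349/25000000 : ℝ) by ring] at h
  rw [hgg]
  refine exp_neg_le ?_ hq (by positivity) (by norm_num)
  have h0 : (0:ℝ) ≤ Real.sqrt (99 : ℝ) := Real.sqrt_nonneg _
  linarith
set_option maxHeartbeats 1000000 in
lemma upT9 : gg 0.508 9 ≤ (3830119/1000000000 : ℝ) := by
  have hgg : gg 0.508 9 = Real.exp (-(0.508 * Real.sqrt (120 : ℝ))) := by norm_num [gg]
  have hC : (219089/20000 : ℝ) ≤ Real.sqrt (120 : ℝ) := r_le_sqrt (by norm_num) (by norm_num) (by norm_num)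
  have hu : (14159543/10000000 : ℝ) ≤ Real.exp ((27824303/5000000 : ℝ)/16) :=
    le_trans (by norm_num) (S9_le_exp (by norm_num))
  have hq : (14159543/10000000 : ℝ)^16 ≤ Real.exp (27824303/5000000 : ℝ) := by
    have h := le_exp_pow16 (by norm_num) hu
    rwa [show (16:ℝ)*((27824303/5000000 : ℝ)/16) = (27824303/5000000 : ℝ) by ring] at h
  rw [hgg]
  refine exp_neg_le ?_ hq (by positivity) (by norm_num)
  have h0 : (0:ℝ) ≤ Real.sqrt (120 : ℝ) := Real.sqrt_nonneg _
  linarith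
set_option maxHeartbeats 1000000 in
lemma upT10 : gg 0.508 10 ≤ (2300117/1000000000 : ℝ) := by
  have hgg : gg 0.508 10 = Real.exp (-(0.508 * Real.sqrt (143 : ℝ))) := by norm_num [gg]
  have hC : (597913/50000 : ℝ) ≤ Real.sqrt (143 : ℝ) := r_le_sqrt (by norm_num) (by norm_num) (by norm_num)
  have hu : (1461809/1000000 : ℝ) ≤ Real.exp ((75934951/12500000 : ℝ)/16) :=
    le_trans (by norm_num) (S9_le_exp (by norm_num))
  have hq : (1461809/1000000 : ℝ)^16 ≤ Real.exp (75934951/12500000 : ℝ) := by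
    have h := le_exp_pow16 (by norm_num) hu
    rwa [show (16:ℝ)*((75934951/12500000 : ℝ)/16) = (75934951/12500000 : ℝ) by ring] at h
  rw [hgg]
  refine exp_neg_le ?_ hq (by positivity) (by norm_num)
  have h0 : (0:ℝ) ≤ Real.sqrt (143 : ℝ) := Real.sqrt_nonneg _
  linarith
set_option maxHeartbeats 1000000 in
lemma upT11 : gg 0.508 11 ≤ (1381713/1000000000 : ℝ) := by
  have hgg : gg 0.508 11 = Real.exp (-(0.508 * Real.sqrt (168 : ℝ))) := by norm_num [gg]
  have hC : (324037/25000 : ℝ) ≤ Real.sqrt (168 : ℝ) := r_le_sqrt (by norm_num) (by norm_num) (by norm_num)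
  have hu : (3772801/2500000 : ℝ) ≤ Real.exp ((41152699/6250000 : ℝ)/16) :=
    le_trans (by norm_num) (S9_le_exp (by norm_num))
  have hq : (3772801/2500000 : ℝ)^16 ≤ Real.exp (41152699/6250000 : ℝ) := by
    have h := le_exp_pow16 (by norm_num) hu
    rwa [show (16:ℝ)*((41152699/6250000 : ℝ)/16) = (41152699/6250000 : ℝ) by ring] at h
  rw [hgg]
  refine exp_neg_le ?_ hq (by positivity) (by norm_num)
  have h0 : (0:ℝ) ≤ Real.sqrt (168 : ℝ) := Real.sqrt_nonneg _
  linarith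
set_option maxHeartbeats 1000000 in
lemma upT12 : gg 0.508 12 ≤ (83021/100000000 : ℝ) := by
  have hgg : gg 0.508 12 = Real.exp (-(0.508 * Real.sqrt (195 : ℝ))) := by norm_num [gg]
  have hC : (174553/12500 : ℝ) ≤ Real.sqrt (195 : ℝ) := r_le_sqrt (by norm_num) (by norm_num) (by norm_num)
  have hu : (7789701/5000000 : ℝ) ≤ Real.exp ((22168231/3125000 : ℝ)/16) :=
    le_trans (by norm_num) (S9_le_exp (by norm_num))
  have hq : (7789701/5000000 : ℝ)^16 ≤ Real.exp (22168231/3125000 : ℝ) := by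
    have h := le_exp_pow16 (by norm_num) hu
    rwa [show (16:ℝ)*((22168231/3125000 : ℝ)/16) = (22168231/3125000 : ℝ) by ring] at h
  rw [hgg]
  refine exp_neg_le ?_ hq (by positivity) (by norm_num)
  have h0 : (0:ℝ) ≤ Real.sqrt (195 : ℝ) := Real.sqrt_nonneg _
  linarith
set_option maxHeartbeats 1000000 in
lemma upT13 : gg 0.508 13 ≤ (124733/250000000 : ℝ) := by
  have hgg : gg 0.508 13 = Real.exp (-(0.508 * Real.sqrt (224 : ℝ))) := by norm_num [gg]
  have hC : (748331/50000 : ℝ) ≤ Real.sqrt (224 : ℝ) := r_le_sqrt (by norm_num) (by norm_num) (by norm_num)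
  have hu : (5026/3125 : ℝ) ≤ Real.exp ((95038037/12500000 : ℝ)/16) :=
    le_trans (by norm_num) (S9_le_exp (by norm_num))
  have hq : (5026/3125 : ℝ)^16 ≤ Real.exp (95038037/12500000 : ℝ) := by
    have h := le_exp_pow16 (by norm_num) hu
    rwa [show (16:ℝ)*((95038037/12500000 : ℝ)/16) = (95038037/12500000 : ℝ) by ring] at h
  rw [hgg]
  refine exp_neg_le ?_ hq (by positivity) (by norm_num)
  have h0 : (0:ℝ) ≤ Real.sqrt (224 : ℝ) := Real.sqrt_nonneg _
  linarith
set_option maxHeartbeats 1000000 in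
lemma upT14 : gg 0.508 14 ≤ (18743/62500000 : ℝ) := by
  have hgg : gg 0.508 14 = Real.exp (-(0.508 * Real.sqrt (255 : ℝ))) := by norm_num [gg]
  have hC : (1596871/100000 : ℝ) ≤ Real.sqrt (255 : ℝ) := r_le_sqrt (by norm_num) (by norm_num) (by norm_num)
  have hu : (129712/78125 : ℝ) ≤ Real.exp ((202802617/25000000 : ℝ)/16) :=
    le_trans (by norm_num) (S9_le_exp (by norm_num))
  have hq : (129712/78125 : ℝ)^16 ≤ Real.exp (202802617/25000000 : ℝ) := by
    have h := le_exp_pow16 (by norm_num) hu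
    rwa [show (16:ℝ)*((202802617/25000000 : ℝ)/16) = (202802617/25000000 : ℝ) by ring] at h
  rw [hgg]
  refine exp_neg_le ?_ hq (by positivity) (by norm_num)
  have h0 : (0:ℝ) ≤ Real.sqrt (255 : ℝ) := Real.sqrt_nonneg _
  linarith
set_option maxHeartbeats 1000000 in
lemma upT15 : gg 0.508 15 ≤ (11267/62500000 : ℝ) := by
  have hgg : gg 0.508 15 = Real.exp (-(0.508 * Real.sqrt (288 : ℝ))) := by norm_num [gg]
  have hC : (53033/3125 : ℝ) ≤ Real.sqrt (288 : ℝ) := r_le_sqrt (by norm_num) (by norm_num) (by norm_num)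
  have hu : (68559/40000 : ℝ) ≤ Real.exp ((6735191/781250 : ℝ)/16) :=
    le_trans (by norm_num) (S9_le_exp (by norm_num))
  have hq : (68559/40000 : ℝ)^16 ≤ Real.exp (6735191/781250 : ℝ) := by
    have h := le_exp_pow16 (by norm_num) hu
    rwa [show (16:ℝ)*((6735191/781250 : ℝ)/16) = (6735191/781250 : ℝ) by ring] at h
  rw [hgg]
  refine exp_neg_le ?_ hq (by positivity) (by norm_num)
  have h0 : (0:ℝ) ≤ Real.sqrt (288 : ℝ) := Real.sqrt_nonneg _
  linarith
set_option maxHeartbeats 1000000 in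
lemma upT16 : gg 0.508 16 ≤ (108379/1000000000 : ℝ) := by
  have hgg : gg 0.508 16 = Real.exp (-(0.508 * Real.sqrt (323 : ℝ))) := by norm_num [gg]
  have hC : (89861/5000 : ℝ) ≤ Real.sqrt (323 : ℝ) := r_le_sqrt (by norm_num) (by norm_num) (by norm_num)
  have hu : (1769359/1000000 : ℝ) ≤ Real.exp ((11412347/1250000 : ℝ)/16) :=
    le_trans (by norm_num) (S9_le_exp (by norm_num))
  have hq : (1769359/1000000 : ℝ)^16 ≤ Real.exp (11412347/1250000 : ℝ) := by
    have h := le_exp_pow16 (by norm_num) hu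
    rwa [show (16:ℝ)*((11412347/1250000 : ℝ)/16) = (11412347/1250000 : ℝ) by ring] at h
  rw [hgg]
  refine exp_neg_le ?_ hq (by positivity) (by norm_num)
  have h0 : (0:ℝ) ≤ Real.sqrt (323 : ℝ) := Real.sqrt_nonneg _
  linarith
set_option maxHeartbeats 1000000 in
lemma upT17 : gg 0.508 17 ≤ (16291/250000000 : ℝ) := by
  have hgg : gg 0.508 17 = Real.exp (-(0.508 * Real.sqrt (360 : ℝ))) := by norm_num [gg]
  have hC : (948683/50000 : ℝ) ≤ Real.sqrt (360 : ℝ) := r_le_sqrt (by norm_num) (by norm_num) (by norm_num)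
  have hu : (18265221/10000000 : ℝ) ≤ Real.exp ((120482741/12500000 : ℝ)/16) :=
    le_trans (by norm_num) (S9_le_exp (by norm_num))
  have hq : (18265221/10000000 : ℝ)^16 ≤ Real.exp (120482741/12500000 : ℝ) := by
    have h := le_exp_pow16 (by norm_num) hu
    rwa [show (16:ℝ)*((120482741/12500000 : ℝ)/16) = (120482741/12500000 : ℝ) by ring] at h
  rw [hgg]
  refine exp_neg_le ?_ hq (by positivity) (by norm_num)
  have h0 : (0:ℝ) ≤ Real.sqrt (360 : ℝ) := Real.sqrt_nonneg _
  linarith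
set_option maxHeartbeats 1000000 in
lemma upT18 : gg 0.508 18 ≤ (39183/1000000000 : ℝ) := by
  have hgg : gg 0.508 18 = Real.exp (-(0.508 * Real.sqrt (399 : ℝ))) := by norm_num [gg]
  have hC : (998749/50000 : ℝ) ≤ Real.sqrt (399 : ℝ) := r_le_sqrt (by norm_num) (by norm_num) (by norm_num)
  have hu : (4713809/2500000 : ℝ) ≤ Real.exp ((126841123/12500000 : ℝ)/16) :=
    le_trans (by norm_num) (S9_le_exp (by norm_num))
  have hq : (4713809/2500000 : ℝ)^16 ≤ Real.exp (126841123/12500000 : ℝ) := by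
    have h := le_exp_pow16 (by norm_num) hu
    rwa [show (16:ℝ)*((126841123/12500000 : ℝ)/16) = (126841123/12500000 : ℝ) by ring] at h
  rw [hgg]
  refine exp_neg_le ?_ hq (by positivity) (by norm_num)
  have h0 : (0:ℝ) ≤ Real.sqrt (399 : ℝ) := Real.sqrt_nonneg _
  linarith
set_option maxHeartbeats 1000000 in
lemma upT19 : gg 0.508 19 ≤ (11781/500000000 : ℝ) := by
  have hgg : gg 0.508 19 = Real.exp (-(0.508 * Real.sqrt (440 : ℝ))) := by norm_num [gg]
  have hC : (2097617/100000 : ℝ) ≤ Real.sqrt (440 : ℝ) := r_le_sqrt (by norm_num) (by norm_num) (by norm_num)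
  have hu : (1946423/1000000 : ℝ) ≤ Real.exp ((266397359/25000000 : ℝ)/16) :=
    le_trans (by norm_num) (S9_le_exp (by norm_num))
  have hq : (1946423/1000000 : ℝ)^16 ≤ Real.exp (266397359/25000000 : ℝ) := by
    have h := le_exp_pow16 (by norm_num) hu
    rwa [show (16:ℝ)*((266397359/25000000 : ℝ)/16) = (266397359/25000000 : ℝ) by ring] at h
  rw [hgg]
  refine exp_neg_le ?_ hq (by positivity) (by norm_num)
  have h0 : (0:ℝ) ≤ Real.sqrt (440 : ℝ) := Real.sqrt_nonneg _
  linarith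
set_option maxHeartbeats 1000000 in
lemma expR : Real.exp (-(0.508:ℝ)) ≤ (6016979/10000000 : ℝ) := by
  have hu : (5161297/5000000 : ℝ) ≤ Real.exp ((0.508:ℝ)/16) :=
    le_trans (by norm_num) (S9_le_exp (by norm_num))
  have hq : (5161297/5000000 : ℝ)^16 ≤ Real.exp (0.508:ℝ) := by
    have h := le_exp_pow16 (by norm_num) hu
    rwa [show (16:ℝ)*((0.508:ℝ)/16) = (0.508:ℝ) by ring] at h
  exact exp_neg_le le_rfl hq (by positivity) (by norm_num)

set_option maxHeartbeats 1000000 in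
lemma upperB : (∑' n : ℕ, gg 0.508 n) < 1 := by
  have hsum := summable_gg (show (0:ℝ) < 0.508 by norm_num)
  have hsplit := Summable.sum_add_tsum_nat_add 20 hsum
  have htail : (∑' n : ℕ, gg 0.508 (n + 20)) ≤ (6/100000 : ℝ) :=
    le_trans (tail_le (by norm_num) expR (by norm_num) 20) (by norm_num)
  have hps : ∑ i ∈ Finset.range 20, gg 0.508 i ≤ (998783387/1000000000 : ℝ) := by
    simp only [Finset.sum_range_succ, Finset.sum_range_zero]
    linarith [upT0, upT1, upT2, upT3, upT4, upT5, upT6, upT7, upT8, upT9, upT10, upT11, upT12, upT13, upT14, upT15, upT16, upT17, upT18, upT19]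
  rw [← hsplit]
  have hlt : (998783387/1000000000 : ℝ) + (6/100000 : ℝ) < 1 := by norm_num
  linarith

theorem stmt4 :
    ∃ s₀ : ℝ, 0 < s₀ ∧
      (∑' k : ℕ+, Real.exp (-s₀ * Real.sqrt ((k : ℝ) * ((k : ℝ) + 2))) = 1) ∧
      (∀ s : ℝ, 0 < s →
        (∑' k : ℕ+, Real.exp (-s * Real.sqrt ((k : ℝ) * ((k : ℝ) + 2))) = 1) → s = s₀) ∧
      1.015 < 2 * s₀ ∧ 2 * s₀ < 1.016 := by
  obtain ⟨s₀, hs₀mem, hFs₀⟩ := intermediate_value_Icc' (by norm_num : (0.5075:ℝ) ≤ 0.508)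
    F_cont ⟨upperB.le, lowerA.le⟩
  have hs₀pos : 0 < s₀ := lt_of_lt_of_le (by norm_num) hs₀mem.1
  have hne1 : s₀ ≠ 0.5075 := by
    intro h; rw [h] at hFs₀; exact absurd hFs₀ (ne_of_gt lowerA)
  have hne2 : s₀ ≠ 0.508 := by
    intro h; rw [h] at hFs₀; exact absurd hFs₀ (ne_of_lt upperB)
  have h1 : 0.5075 < s₀ := lt_of_le_of_ne hs₀mem.1 (Ne.symm hne1)
  have h2 : s₀ < 0.508 := lt_of_le_of_ne hs₀mem.2 hne2
  have hFs₀' : (∑' n : ℕ, gg s₀ n) = 1 := hFs₀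
  refine ⟨s₀, hs₀pos, by rw [key_eq]; exact hFs₀', ?_, by linarith, by linarith⟩
  intro s hs hFs
  rw [key_eq] at hFs
  rcases lt_trichotomy s s₀ with h | h | h
  · have := F_strict_anti hs h; rw [hFs, hFs₀'] at this; linarith
  · exact h
  · have := F_strict_anti hs₀pos h; rw [hFs, hFs₀'] at this; linarith
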